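/- For any coprime positive integers a and c, one has s(a - c, 2a) = -s(c,a) - s(c,a;1/2,1/2), obtained by splitting the summation over μ mod 2a into even and odd residues. -/

import Mathlib

open Finset Real

open Classical in
/-- The sawtooth function: 0 on integers, fractional part minus 1/2 otherwise. -/
noncomputable def saw (x : ℝ) : ℝ :=
  if ∃ n : ℤ, x = n then 0 else Int.fract x - 1/2

/-- The Dedekind sum s(q,p). -/
noncomputable def dedekindSum (q : ℤ) (p : ℕ) : ℝ :=
  ∑ μ ∈ Finset.range p, saw ((μ : ℝ) / p) * saw ((q : ℝ) * μ / p)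

/-- The Dedekind–Rademacher sum s(q,p;x,y). -/
noncomputable def drSum (q : ℤ) (p : ℕ) (x y : ℝ) : ℝ :=
  ∑ μ ∈ Finset.range p, saw (((μ : ℝ) + y) / p) * saw ((q : ℝ) * ((μ : ℝ) + y) / p + x)

lemma saw_intCast_add (n : ℤ) (x : ℝ) : saw ((n : ℝ) + x) = saw x := by
  unfold saw
  by_cases hx : ∃ m : ℤ, x = m
  · obtain ⟨m, rfl⟩ := hx
    rw [if_pos ⟨n + m, by push_cast; ring⟩, if_pos ⟨m, rfl⟩]
  · have h' : ¬ ∃ m : ℤ, (n:ℝ) + x = m := by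
      rintro ⟨m, hm⟩; exact hx ⟨m - n, by push_cast; linarith⟩
    rw [if_neg h', if_neg hx, Int.fract_intCast_add]

lemma saw_neg (x : ℝ) : saw (-x) = -saw x := by
  unfold saw
  by_cases h : ∃ n : ℤ, x = n
  · obtain ⟨n, rfl⟩ := h
    rw [if_pos ⟨-n, by push_cast; ring⟩, if_pos ⟨n, rfl⟩, neg_zero]
  · have h' : ¬ ∃ n : ℤ, -x = n := by
      rintro ⟨n, hn⟩; exact h ⟨-n, by push_cast; linarith⟩
    rw [if_neg h', if_neg h]
    have hf : Int.fract x ≠ 0 := by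
      intro h0
      have := Int.floor_add_fract x
      exact h ⟨⌊x⌋, by linarith⟩
    rw [Int.fract_neg hf]; ring

lemma sum_range_two_mul (f : ℕ → ℝ) (n : ℕ) :
    ∑ μ ∈ Finset.range (2 * n), f μ
      = ∑ ν ∈ Finset.range n, (f (2 * ν) + f (2 * ν + 1)) := by
  induction n with
  | zero => simp
  | succ m ih =>
      have : 2 * (m + 1) = (2 * m + 1) + 1 := by ring
      rw [this, Finset.sum_range_succ, Finset.sum_range_succ, ih, Finset.sum_range_succ]
      ring

theorem dedekind_sum_even_odd_split (a c : ℕ) (ha : 0 < a) (hc : 0 < c)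
    (hcop : Nat.Coprime a c) :
    dedekindSum ((a : ℤ) - c) (2 * a)
      = -dedekindSum (c : ℤ) a - drSum (c : ℤ) a (1/2) (1/2) := by
  have ha' : (a : ℝ) ≠ 0 := Nat.cast_ne_zero.mpr ha.ne'
  unfold dedekindSum drSum
  rw [sum_range_two_mul]
  conv_rhs => rw [sub_eq_add_neg, ← Finset.sum_neg_distrib, ← Finset.sum_neg_distrib,
    ← Finset.sum_add_distrib]
  apply Finset.sum_congr rfl
  intro ν _
  have e1 : ((2 * ν : ℕ) : ℝ) / ((2 * a : ℕ) : ℝ) = (ν : ℝ) / a := by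
    push_cast; field_simp
  have e2 : (((a : ℤ) - c : ℤ) : ℝ) * ((2 * ν : ℕ) : ℝ) / ((2 * a : ℕ) : ℝ)
      = ((ν : ℤ) : ℝ) + -((c : ℝ) * ν / a) := by
    push_cast; field_simp; ring
  have e3 : ((2 * ν + 1 : ℕ) : ℝ) / ((2 * a : ℕ) : ℝ) = ((ν : ℝ) + 1/2) / a := by
    push_cast; field_simp
  have e4 : (((a : ℤ) - c : ℤ) : ℝ) * ((2 * ν + 1 : ℕ) : ℝ) / ((2 * a : ℕ) : ℝ)
      = (((ν : ℤ) + 1 : ℤ) : ℝ) + -((c : ℝ) * ((ν : ℝ) + 1/2) / a + 1/2) := by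
    push_cast; field_simp; ring
  rw [e1, e2, e3, e4, saw_intCast_add, saw_intCast_add, saw_neg, saw_neg]
  push_cast
  ring
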